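/- The product of two homomorphisms of indexed pip-spaces is always defined and is again a homomorphism; moreover A is a homomorphism from V_I to Y_K if and only if A^× is a homomorphism from Y_K to V_I. -/
import Mathlib


/-- An operator `A` between indexed pip-spaces is a homomorphism: for every `r` there is
`u` such that both representatives `A_{ur} : V_r → Y_u` and `A_{ū r̄} : V_r̄ → Y_ū` exist,
and conversely for every `u` there is such an `r`. -/
def IsHomo {V Y : Type*} [AddCommGroup V] [Module ℂ V] [AddCommGroup Y] [Module ℂ Y]
    {I K : Type*} (VI : I → Submodule ℂ V) (YK : K → Submodule ℂ Y)
    (barI : I → I) (barK : K → K) (A : V →ₗ[ℂ] Y) : Prop :=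
  (∀ r : I, ∃ u : K, Set.MapsTo A (VI r : Set V) (YK u : Set Y) ∧
      Set.MapsTo A (VI (barI r) : Set V) (YK (barK u) : Set Y)) ∧
  (∀ u : K, ∃ r : I, Set.MapsTo A (VI r : Set V) (YK u : Set Y) ∧
      Set.MapsTo A (VI (barI r) : Set V) (YK (barK u) : Set Y))

/-- The product of two homomorphisms of indexed pip-spaces is always defined (it factors
through an intermediate assaying subspace) and is again a homomorphism; moreover `A` is a
homomorphism iff its adjoint `A^×` is. -/
theorem homo_comp_and_adjoint {V Y Z : Type*}
    [AddCommGroup V] [Module ℂ V] [AddCommGroup Y] [Module ℂ Y] [AddCommGroup Z] [Module ℂ Z]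
    {I K L : Type*} [Nonempty I]
    (VI : I → Submodule ℂ V) (YK : K → Submodule ℂ Y) (ZL : L → Submodule ℂ Z)
    (barI : I → I) (barK : K → K) (barL : L → L)
    (hbarI : ∀ r, barI (barI r) = r) (hbarK : ∀ u, barK (barK u) = u)
    (A : V →ₗ[ℂ] Y) (A' : Y →ₗ[ℂ] V) (B : Y →ₗ[ℂ] Z)
    -- a representative `A_{ur}` exists iff the representative `(A^×)_{r̄ ū}` exists
    (hadj : ∀ (r : I) (u : K),
      Set.MapsTo A (VI r : Set V) (YK u : Set Y) ↔
        Set.MapsTo A' (YK (barK u) : Set Y) (VI (barI r) : Set V))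
    (hA : IsHomo VI YK barI barK A) (hB : IsHomo YK ZL barK barL B) :
    -- the product BA is defined: there is a continuous factorization through some Y_t
    (∃ t : K, (∃ r : I, Set.MapsTo A (VI r : Set V) (YK t : Set Y)) ∧
      (∃ l : L, Set.MapsTo B (YK t : Set Y) (ZL l : Set Z))) ∧
    -- the product is a homomorphism
    IsHomo VI ZL barI barL (B.comp A) ∧
    -- A is a homomorphism iff A^× is a homomorphism
    (IsHomo VI YK barI barK A ↔ IsHomo YK VI barK barI A') := by
  refine ⟨?_, ?_, ?_⟩
  · obtain ⟨r0⟩ := ‹Nonempty I›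
    obtain ⟨u, hu1, _⟩ := hA.1 r0
    obtain ⟨l, hl1, _⟩ := hB.1 u
    exact ⟨u, ⟨r0, hu1⟩, ⟨l, hl1⟩⟩
  · constructor
    · intro r
      obtain ⟨u, hu1, hu2⟩ := hA.1 r
      obtain ⟨l, hl1, hl2⟩ := hB.1 u
      exact ⟨l, hl1.comp hu1, hl2.comp hu2⟩
    · intro l
      obtain ⟨u, hu1, hu2⟩ := hB.2 l
      obtain ⟨r, hr1, hr2⟩ := hA.2 u
      exact ⟨r, hu1.comp hr1, hu2.comp hr2⟩
  · constructor
    · intro h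
      constructor
      · intro u
        obtain ⟨r, hr1, hr2⟩ := h.2 u
        refine ⟨r, ?_, (hadj r u).mp hr1⟩
        have := (hadj (barI r) (barK u)).mp hr2
        simpa [hbarI, hbarK] using this
      · intro r
        obtain ⟨u, hu1, hu2⟩ := h.1 r
        refine ⟨u, ?_, (hadj r u).mp hu1⟩
        have := (hadj (barI r) (barK u)).mp hu2
        simpa [hbarI, hbarK] using this
    · intro h
      constructor
      · intro r
        obtain ⟨u, hu1, hu2⟩ := h.2 r
        refine ⟨u, (hadj r u).mpr hu2, ?_⟩
        apply (hadj (barI r) (barK u)).mpr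
        simpa [hbarI, hbarK] using hu1
      · intro u
        obtain ⟨r, hr1, hr2⟩ := h.1 u
        refine ⟨r, (hadj r u).mpr hr2, ?_⟩
        apply (hadj (barI r) (barK u)).mpr
        simpa [hbarI, hbarK] using hr1
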